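/- Let 𝒜 be an abelian category admitting countable products (for instance the category of abelian groups). Let X be a cochain complex in 𝒜 and let D : X → X be a chain map of degree −2 (maps D : X^m → X^{m−2} commuting with the differentials). Let P be the cochain complex with P^n = ∏_{i∈ℕ} X^{n+2i} and componentwise differential, let D̂ : P → P be the degree-0 chain map with D̂(x)_i = D(x_{i+1}), and let Y be the cochain complex with Y^n = P^n ⊕ P^{n+1} and differential δ(a,b) = (d a + (1 − D̂)(b), −d b). Then the degree-0 chain endomorphism I of Y defined by I(a,b) = (D̂ a, D̂ b) is chain homotopic to the identity of Y; explicitly, with the homotopy J : Y^n → Y^{n−1}, J(a,b) = (0, a), one has id_Y − I = δ ∘ J + J ∘ δ. -/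

import Mathlib

open CategoryTheory CategoryTheory.Limits

universe v u

variable {A : Type u} [Category.{v} A] [Abelian A] [HasCountableProducts A]

/-- The object `P^n = ∏_{i∈ℕ} X^{n+2i}`. -/
noncomputable def Pobj (X : CochainComplex A ℤ) (n : ℤ) : A :=
  ∏ᶜ fun i : ℕ => X.X (n + 2 * (i : ℤ))

/-- The (total) componentwise differential of the complex `P`. -/
noncomputable def dP (X : CochainComplex A ℤ) (n m : ℤ) : Pobj X n ⟶ Pobj X m :=
  Pi.lift fun i : ℕ => Pi.π _ i ≫ X.d (n + 2 * (i : ℤ)) (m + 2 * (i : ℤ))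

/-- The map `D̂ : P^n ⟶ P^n`, `D̂(x)_i = D(x_{i+1})`, induced by a total family
`D n m : X^n ⟶ X^m` (supported in degree `m = n - 2`). -/
noncomputable def Dhat (X : CochainComplex A ℤ) (D : ∀ n m : ℤ, X.X n ⟶ X.X m) (n : ℤ) :
    Pobj X n ⟶ Pobj X n :=
  Pi.lift fun i : ℕ =>
    Pi.π (fun j : ℕ => X.X (n + 2 * (j : ℤ))) (i + 1) ≫
      D (n + 2 * ((i + 1 : ℕ) : ℤ)) (n + 2 * (i : ℤ))

/-- The object `Y^n = P^n ⊕ P^{n+1}`. -/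
noncomputable def Yobj (X : CochainComplex A ℤ) (n : ℤ) : A :=
  Pobj X n ⊞ Pobj X (n + 1)

/-- The (total) differential `δ(a,b) = (d a + (1 - D̂) b, -d b)` of the complex `Y`. -/
noncomputable def deltaY (X : CochainComplex A ℤ) (D : ∀ n m : ℤ, X.X n ⟶ X.X m) (n m : ℤ) :
    Yobj X n ⟶ Yobj X m :=
  if h : n + 1 = m then
    (biprod.lift
        (biprod.fst ≫ dP X n (n + 1) + biprod.snd ≫ (𝟙 (Pobj X (n + 1)) - Dhat X D (n + 1)))
        (biprod.snd ≫ (-dP X (n + 1) (n + 1 + 1))) :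
      Yobj X n ⟶ Yobj X (n + 1)) ≫ eqToHom (congrArg (Yobj X) h)
  else 0

/-- The (total) homotopy `J(a,b) = (0,a)`, of degree `-1`. -/
noncomputable def Jmap (X : CochainComplex A ℤ) (n m : ℤ) : Yobj X n ⟶ Yobj X m :=
  if h : n - 1 = m then
    (biprod.lift (0 : Yobj X n ⟶ Pobj X (n - 1))
        (biprod.fst ≫ eqToHom (congrArg (Pobj X) (by ring : n = n - 1 + 1))) :
      Yobj X n ⟶ Yobj X (n - 1)) ≫ eqToHom (congrArg (Yobj X) h)
  else 0

/-- The endomorphism `I(a,b) = (D̂ a, D̂ b)` of `Y^n`. -/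
noncomputable def Imap (X : CochainComplex A ℤ) (D : ∀ n m : ℤ, X.X n ⟶ X.X m) (n : ℤ) :
    Yobj X n ⟶ Yobj X n :=
  biprod.map (Dhat X D n) (Dhat X D (n + 1))

lemma eqToHom_Yobj (X : CochainComplex A ℤ) {n m : ℤ} (h : n = m) :
    eqToHom (congrArg (Yobj X) h) =
      (biprod.map (eqToHom (congrArg (Pobj X) h))
        (eqToHom (congrArg (Pobj X) (by rw [h]) : Pobj X (n + 1) = Pobj X (m + 1))) :
        Pobj X n ⊞ Pobj X (n + 1) ⟶ Pobj X m ⊞ Pobj X (m + 1)) := by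
  subst h
  simp only [eqToHom_refl]
  symm
  delta Yobj
  apply biprod.hom_ext <;> simp <;> exact (Category.id_comp _).symm

lemma dP_congr (X : CochainComplex A ℤ) {n n' m m' : ℤ} (h : n = n') (h' : m = m') :
    dP X n m =
      eqToHom (congrArg (Pobj X) h) ≫ dP X n' m' ≫ eqToHom (congrArg (Pobj X) h'.symm) := by
  subst h; subst h'; simp

lemma Dhat_congr (X : CochainComplex A ℤ) (D : ∀ n m : ℤ, X.X n ⟶ X.X m) {n n' : ℤ}
    (h : n = n') :
    Dhat X D n =
      eqToHom (congrArg (Pobj X) h) ≫ Dhat X D n' ≫ eqToHom (congrArg (Pobj X) h.symm) := by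
  subst h; simp

/-- Let `X` be a cochain complex in an abelian category with countable
products and let `D` be a chain map of degree `-2` on `X`.  Then the endomorphism
`I(a,b) = (D̂ a, D̂ b)` of the complex `Y` (the shifted mapping cone of `1 - D̂`, i.e. the
homotopy limit of the tower `X ← X[2] ← X[4] ← ⋯`) is chain homotopic to the identity via
the homotopy `J(a,b) = (0,a)`:  `id - I = δ ∘ J + J ∘ δ`. -/
theorem homotopy_id_sub_I (X : CochainComplex A ℤ)
    (D : ∀ n m : ℤ, X.X n ⟶ X.X m)
    (hD0 : ∀ n m : ℤ, m ≠ n - 2 → D n m = 0)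
    (hDcomm : ∀ n : ℤ, D n (n - 2) ≫ X.d (n - 2) (n - 1) = X.d n (n + 1) ≫ D (n + 1) (n - 1)) :
    ∀ n : ℤ,
      𝟙 (Yobj X n) - Imap X D n =
        Jmap X n (n - 1) ≫ deltaY X D (n - 1) n + deltaY X D n (n + 1) ≫ Jmap X (n + 1) n := by
  intro n
  have h1 : n - 1 + 1 = n := by ring
  have h2 : n + 1 - 1 = n := by ring
  rw [Jmap, deltaY, deltaY, Jmap, dif_pos rfl, dif_pos h1, dif_pos rfl, dif_pos h2]
  erw [eqToHom_Yobj X h1, eqToHom_Yobj X h2, eqToHom_Yobj X (rfl : n - 1 = n - 1),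
    eqToHom_Yobj X (rfl : n + 1 = n + 1),
    dP_congr X h1 (show n - 1 + 1 + 1 = n + 1 by ring),
    dP_congr X (rfl : n - 1 = n - 1) h1,
    Dhat_congr X D h1, Imap]
  delta Yobj
  apply biprod.hom_ext <;>
    simp [eqToHom_trans, eqToHom_trans_assoc]
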